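/- For any finite simple graph G, twice the fractional matching number of G is an integer; moreover there exists a maximum fractional matching f with f(e) ∈ {0, 1/2, 1} for every edge e. -/
import Mathlib


open Finset

namespace SCF

variable {V : Type*}

/-- Degree of `v` in `F` (as the cardinality of its neighbor set). -/
noncomputable def deg [Fintype V] (F : SimpleGraph V) (v : V) : ℕ :=
  (F.neighborSet v).ncard

/-- Number of isolated vertices of `G - S`. -/
noncomputable def iso [Fintype V] (G : SimpleGraph V) (S : Set V) : ℕ :=
  {v | v ∉ S ∧ ∀ w, G.Adj v w → w ∈ S}.ncard

/-- The component of `v` in `F` is a single edge `K_{1,1}`. -/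
def IsK11Comp [Fintype V] (F : SimpleGraph V) (v : V) : Prop :=
  deg F v = 1 ∧ ∀ w, F.Adj v w → deg F w = 1

/-- The component of `v` in `F` is a path on three vertices `K_{1,2}`. -/
def IsK12Comp [Fintype V] (F : SimpleGraph V) (v : V) : Prop :=
  ∃ c a b, a ≠ b ∧ F.Adj c a ∧ F.Adj c b ∧ deg F c = 2 ∧ deg F a = 1 ∧ deg F b = 1 ∧
    (v = c ∨ v = a ∨ v = b)

/-- The component of `v` in `F` is a cycle (2-regular connected, so length ≥ 3). -/
def IsCycleComp [Fintype V] (F : SimpleGraph V) (v : V) : Prop :=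
  ∀ w, F.Reachable v w → deg F w = 2

/-- The component of `v` in `F` is an odd cycle. -/
def IsOddCycleComp [Fintype V] (F : SimpleGraph V) (v : V) : Prop :=
  IsCycleComp F v ∧ Odd {w | F.Reachable v w}.ncard

/-- The component of `v` in `F` is a star `K_{1,i}` for some `i ≥ 1`. -/
def IsStarComp [Fintype V] (F : SimpleGraph V) (v : V) : Prop :=
  ∃ c, (v = c ∨ F.Adj c v) ∧ 0 < deg F c ∧ ∀ w, F.Adj c w → deg F w = 1

/-- The component of `v` in `F` is a star `K_{1,i}` with `1 ≤ i ≤ n`. -/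
def IsStarAtMostComp [Fintype V] (F : SimpleGraph V) (n : ℕ) (v : V) : Prop :=
  ∃ c, (v = c ∨ F.Adj c v) ∧ 0 < deg F c ∧ deg F c ≤ n ∧ ∀ w, F.Adj c w → deg F w = 1

/-- `F` is a `{K_{1,1}, C_m : m ≥ 3}`-factor of `G`. -/
def IsK11CycleFactor [Fintype V] (G F : SimpleGraph V) : Prop :=
  F ≤ G ∧ ∀ v, IsK11Comp F v ∨ IsCycleComp F v

/-- `F` is a `{K_{1,1}, K_{1,2}, C_m : m ≥ 3}`-factor of `G`. -/
def IsK11K12CycleFactor [Fintype V] (G F : SimpleGraph V) : Prop :=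
  F ≤ G ∧ ∀ v, IsK11Comp F v ∨ IsK12Comp F v ∨ IsCycleComp F v

/-- Number of `K_{1,2}`-components of `F`, counted by their centers. -/
noncomputable def countK12 [Fintype V] (F : SimpleGraph V) : ℕ :=
  {v | deg F v = 2 ∧ ∀ w, F.Adj v w → deg F w = 1}.ncard

/-- `min(G, K_{1,2})`: the minimum number of `K_{1,2}`-components over all
`{K_{1,1}, K_{1,2}, C_m : m ≥ 3}`-factors of `G`. -/
noncomputable def minK12 [Fintype V] (G : SimpleGraph V) : ℕ :=
  sInf {t | ∃ F, IsK11K12CycleFactor G F ∧ countK12 F = t}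

/-- `f` is a fractional matching of `G`. -/
def IsFracMatching [Fintype V] [DecidableEq V] (G : SimpleGraph V) [DecidableRel G.Adj]
    (f : Sym2 V → ℝ) : Prop :=
  (∀ e, 0 ≤ f e ∧ f e ≤ 1) ∧ (∀ e, e ∉ G.edgeSet → f e = 0) ∧
    ∀ v : V, ∑ e ∈ G.edgeFinset, (if v ∈ e then f e else 0) ≤ 1

/-- Total weight of a fractional matching. -/
def weight [Fintype V] [DecidableEq V] (G : SimpleGraph V) [DecidableRel G.Adj]
    (f : Sym2 V → ℝ) : ℝ :=
  ∑ e ∈ G.edgeFinset, f e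

/-- The fractional matching number `μ_f(G)`. -/
noncomputable def nuF [Fintype V] [DecidableEq V] (G : SimpleGraph V) [DecidableRel G.Adj] : ℝ :=
  sSup (weight G '' {f | IsFracMatching G f})

/-- `f` is a maximum fractional matching of `G`. -/
def IsMaxFracMatching [Fintype V] [DecidableEq V] (G : SimpleGraph V) [DecidableRel G.Adj]
    (f : Sym2 V → ℝ) : Prop :=
  IsFracMatching G f ∧ weight G f = nuF G

/-- `s` is an independent set of vertices of `G`. -/
def IsIndepSet (G : SimpleGraph V) (s : Set V) : Prop :=
  ∀ ⦃u⦄, u ∈ s → ∀ ⦃w⦄, w ∈ s → ¬ G.Adj u w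

/-- The independence number `α(G)`. -/
noncomputable def alpha [Fintype V] (G : SimpleGraph V) : ℕ :=
  sSup {n | ∃ s : Set V, IsIndepSet G s ∧ s.ncard = n}

/-- `G` has a proper edge coloring with `k` colors. -/
def HasProperEdgeColoring (G : SimpleGraph V) (k : ℕ) : Prop :=
  ∃ c : Sym2 V → Fin k, ∀ e₁ ∈ G.edgeSet, ∀ e₂ ∈ G.edgeSet,
    e₁ ≠ e₂ → ∀ v : V, v ∈ e₁ → v ∈ e₂ → c e₁ ≠ c e₂

/-- The chromatic index `χ'(G)`: the minimum number of colors (equivalently matchings)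
needed to properly color the edges of `G`. -/
noncomputable def chromIdx (G : SimpleGraph V) : ℕ :=
  sInf {k | HasProperEdgeColoring G k}

/-- `G` is a `k`-critical graph. -/
def IsCriticalWith [Fintype V] (G : SimpleGraph V) [DecidableRel G.Adj] (k : ℕ) : Prop :=
  2 ≤ k ∧ G.maxDegree = k ∧ chromIdx G = k + 1 ∧
    ∀ H : SimpleGraph V, H < G → chromIdx H ≤ k

/-- `G` is an edge-chromatic critical graph. -/
def IsCritical [Fintype V] (G : SimpleGraph V) [DecidableRel G.Adj] : Prop :=
  ∃ k, IsCriticalWith G k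

/-- `G` is factor-critical: deleting any vertex leaves a graph with a perfect matching. -/
def IsFactorCritical (G : SimpleGraph V) : Prop :=
  ∀ v : V, ∃ M : G.Subgraph, M.verts = {v}ᶜ ∧ M.IsMatching

end SCF

open SCF

section HalfIntegral

open Finset SCF

variable {V : Type*} [Fintype V] [DecidableEq V] (G : SimpleGraph V) [DecidableRel G.Adj]

private lemma sumA (f : Sym2 V → ℝ) (u : V) :
    ∑ v : V, (if G.Adj u v then f s(u, v) else 0)
      = ∑ e ∈ G.edgeFinset, (if u ∈ e then f e else 0) := by
  rw [← Finset.sum_filter, ← Finset.sum_filter]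
  refine Finset.sum_bij' (fun v _ => s(u, v))
    (fun e he => Sym2.Mem.other' (Finset.mem_filter.1 he).2) ?_ ?_ ?_ ?_ ?_
  · intro v hv
    refine Finset.mem_filter.2 ⟨SimpleGraph.mem_edgeFinset.2 ?_, Sym2.mem_mk_left u v⟩
    exact G.mem_edgeSet.2 (Finset.mem_filter.1 hv).2
  · intro e he
    have hu : u ∈ e := (Finset.mem_filter.1 he).2
    have he' : e ∈ G.edgeSet := SimpleGraph.mem_edgeFinset.1 (Finset.mem_filter.1 he).1
    refine Finset.mem_filter.2 ⟨Finset.mem_univ _, ?_⟩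
    rw [← SimpleGraph.mem_edgeSet, Sym2.other_spec' hu]
    exact he'
  · intro v hv
    exact Sym2.congr_right.1 (Sym2.other_spec' (Sym2.mem_mk_left u v))
  · intro e he
    exact Sym2.other_spec' (Finset.mem_filter.1 he).2
  · intro v hv; rfl

private lemma double (h : Sym2 V → ℝ) :
    ∑ u : V, ∑ v : V, (if G.Adj u v then h s(u, v) else 0) = 2 * weight G h := by
  rw [Finset.sum_congr rfl fun u _ => sumA G h u, Finset.sum_comm]
  rw [weight, Finset.mul_sum]
  refine Finset.sum_congr rfl fun e he => ?_
  have he' : e ∈ G.edgeSet := SimpleGraph.mem_edgeFinset.1 he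
  clear he
  revert he'
  induction e using Sym2.ind with
  | _ a b =>
    intro he'
    have hab : a ≠ b := (G.mem_edgeSet.1 he').ne
    have hmem : ∀ u : V, (if u ∈ s(a, b) then h s(a, b) else 0)
        = if u ∈ ({a, b} : Finset V) then h s(a, b) else 0 := by
      intro u; simp [Sym2.mem_iff]
    rw [Finset.sum_congr rfl fun u _ => hmem u, Finset.sum_ite_mem, Finset.univ_inter,
      Finset.sum_const, Finset.card_insert_of_notMem (by simpa using hab),
      Finset.card_singleton]
    push_cast
    rw [nsmul_eq_mul]
    push_cast
    ring

/-- The half-integral candidate matching associated to a permutation. -/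
noncomputable def halfPerm (σ : Equiv.Perm V) : Sym2 V → ℝ :=
  Sym2.lift ⟨fun u v => if u = v then 0 else
      ((if σ u = v then (1 : ℝ) else 0) + (if σ v = u then 1 else 0)) / 2, by
    intro a b
    dsimp only
    by_cases h : a = b
    · subst h; rfl
    · rw [if_neg h, if_neg (Ne.symm h), add_comm]⟩

lemma halfPerm_mk (σ : Equiv.Perm V) (u v : V) :
    halfPerm σ s(u, v) = if u = v then 0 else
      ((if σ u = v then (1 : ℝ) else 0) + (if σ v = u then 1 else 0)) / 2 := rfl

lemma halfPerm_mem (σ : Equiv.Perm V) (e : Sym2 V) :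
    halfPerm σ e ∈ ({0, 1/2, 1} : Set ℝ) := by
  induction e using Sym2.ind with
  | _ a b =>
    rw [halfPerm_mk]
    split_ifs <;> norm_num [Set.mem_insert_iff]

lemma halfPerm_nonneg (σ : Equiv.Perm V) (e : Sym2 V) : 0 ≤ halfPerm σ e := by
  rcases halfPerm_mem σ e with h | h | h <;> rw [h] <;> norm_num

lemma halfPerm_isFracMatching (σ : Equiv.Perm V)
    (hcomp : ∀ u v : V, u ≠ v → σ u = v → G.Adj u v) :
    IsFracMatching G (halfPerm σ) := by
  refine ⟨fun e => ⟨halfPerm_nonneg σ e, ?_⟩, ?_, ?_⟩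
  · rcases halfPerm_mem σ e with h | h | h <;> rw [h] <;> norm_num
  · intro e
    induction e using Sym2.ind with
    | _ a b =>
      intro he
      rw [halfPerm_mk]
      by_cases hab : a = b
      · rw [if_pos hab]
      · rw [if_neg hab]
        have h1 : ¬ σ a = b := fun h => he (G.mem_edgeSet.2 (hcomp a b hab h))
        have h2 : ¬ σ b = a := fun h => he (G.mem_edgeSet.2
          ((hcomp b a (Ne.symm hab) h).symm))
        rw [if_neg h1, if_neg h2]
        norm_num
  · intro u
    rw [← sumA G (halfPerm σ) u]
    have hle : ∑ v : V, (if G.Adj u v then halfPerm σ s(u, v) else 0)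
        ≤ ∑ v : V, (((if σ u = v then (1:ℝ) else 0) + (if σ v = u then 1 else 0)) / 2) := by
      refine Finset.sum_le_sum fun v _ => ?_
      by_cases hA : G.Adj u v
      · rw [if_pos hA, halfPerm_mk, if_neg hA.ne]
      · rw [if_neg hA]
        positivity
    refine hle.trans ?_
    have h1 : ∑ v : V, (if σ u = v then (1:ℝ) else 0) = 1 := by
      rw [Finset.sum_ite_eq]; simp
    have h2 : ∑ v : V, (if σ v = u then (1:ℝ) else 0) = 1 := by
      simp only [Equiv.apply_eq_iff_eq_symm_apply]
      rw [Finset.sum_ite_eq']; simp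
    rw [← Finset.sum_div, Finset.sum_add_distrib, h1, h2]
    norm_num

/-- Key decomposition: any fractional matching is dominated by some half-integral one. -/
lemma exists_halfPerm_ge {f : Sym2 V → ℝ} (hf : IsFracMatching G f) :
    ∃ σ : Equiv.Perm V, (∀ u v : V, u ≠ v → σ u = v → G.Adj u v) ∧
      weight G f ≤ weight G (halfPerm σ) := by
  classical
  set d : V → ℝ := fun u => ∑ e ∈ G.edgeFinset, (if u ∈ e then f e else 0) with hd
  set M : Matrix V V ℝ := fun u v => if u = v then 1 - d u
    else if G.Adj u v then f s(u, v) else 0 with hM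
  have hMsymm : ∀ u v, M v u = M u v := by
    intro u v
    by_cases h : u = v
    · subst h; rfl
    · simp only [hM, if_neg h, if_neg (Ne.symm h)]
      by_cases hA : G.Adj u v
      · rw [if_pos hA, if_pos hA.symm]
        exact congrArg f Sym2.eq_swap
      · rw [if_neg hA, if_neg fun h' => hA h'.symm]
  have hrow : ∀ u, ∑ v, M u v = 1 := by
    intro u
    have hsplit : ∀ v, M u v = (if v = u then 1 - d u else 0)
        + (if G.Adj u v then f s(u, v) else 0) := by
      intro v
      by_cases h : u = v
      · subst h
        simp [hM, G.irrefl]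
      · simp only [hM, if_neg h, if_neg (Ne.symm h), zero_add]
    rw [Finset.sum_congr rfl fun v _ => hsplit v, Finset.sum_add_distrib,
      Finset.sum_ite_eq', sumA G f u]
    simp [hd]
  have hMds : M ∈ doublyStochastic ℝ V := by
    rw [mem_doublyStochastic_iff_sum]
    refine ⟨fun u v => ?_, hrow, fun v => ?_⟩
    · by_cases h : u = v
      · subst h
        simp only [hM, if_pos rfl]
        have h1 := hf.2.2 u
        have h2 : d u = ∑ e ∈ G.edgeFinset, (if u ∈ e then f e else 0) := rfl
        rw [h2]
        linarith
      · simp only [hM, if_neg h]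
        split_ifs
        · exact (hf.1 _).1
        · exact le_refl 0
    · calc ∑ i : V, M i v = ∑ i : V, M v i := Finset.sum_congr rfl fun u _ => (hMsymm u v).symm
        _ = 1 := hrow v
  obtain ⟨w, hw0, hw1, hwM⟩ := exists_eq_sum_perm_of_mem_doublyStochastic hMds
  have hperm : ∀ (σ : Equiv.Perm V) u v, (σ.permMatrix ℝ) u v = if σ u = v then 1 else 0 := by
    intro σ u v
    simp [Equiv.Perm.permMatrix, PEquiv.toMatrix_apply, Equiv.toPEquiv_apply, Option.mem_def,
      eq_comm]
  have hentry : ∀ u v, M u v = ∑ σ : Equiv.Perm V, w σ * (if σ u = v then 1 else 0) := by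
    intro u v
    conv_lhs => rw [← hwM]
    rw [Matrix.sum_apply]
    refine Finset.sum_congr rfl fun σ _ => ?_
    rw [Matrix.smul_apply, hperm, smul_eq_mul]
  have hcomp : ∀ σ : Equiv.Perm V, w σ ≠ 0 → ∀ u v : V, u ≠ v → σ u = v → G.Adj u v := by
    intro σ hσ u v huv hσuv
    by_contra hA
    have hM0 : M u v = 0 := by
      have : M u v = if G.Adj u v then f s(u, v) else 0 := by
        simp only [hM]
        rw [if_neg huv]
      rw [this, if_neg hA]
    have hz0 := hentry u v
    rw [hM0] at hz0
    have hz := (Finset.sum_eq_zero_iff_of_nonneg (fun τ _ =>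
      mul_nonneg (hw0 τ) (by split_ifs <;> norm_num))).1 hz0.symm σ (Finset.mem_univ σ)
    rw [if_pos hσuv, mul_one] at hz
    exact hσ hz
  -- weight of halfPerm σ via double counting
  have hW : ∀ σ : Equiv.Perm V,
      ∑ u : V, ∑ v : V, (if G.Adj u v then (if σ u = v then (1:ℝ) else 0) else 0)
        = 2 * weight G (halfPerm σ) := by
    intro σ
    rw [← double]
    have S2 : ∑ u : V, ∑ v : V, (if G.Adj u v then (if σ v = u then (1:ℝ) else 0) else 0)
        = ∑ u : V, ∑ v : V, (if G.Adj u v then (if σ u = v then (1:ℝ) else 0) else 0) := by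
      rw [Finset.sum_comm]
      refine Finset.sum_congr rfl fun u _ => Finset.sum_congr rfl fun v _ => ?_
      by_cases hA : G.Adj u v
      · rw [if_pos hA.symm, if_pos hA]
      · rw [if_neg (fun h' => hA h'.symm), if_neg hA]
    have hterm : ∀ u v : V, (if G.Adj u v then halfPerm σ s(u, v) else 0)
        = ((if G.Adj u v then (if σ u = v then (1:ℝ) else 0) else 0)
          + (if G.Adj u v then (if σ v = u then (1:ℝ) else 0) else 0)) / 2 := by
      intro u v
      by_cases hA : G.Adj u v
      · rw [if_pos hA, if_pos hA, if_pos hA, halfPerm_mk, if_neg hA.ne]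
      · rw [if_neg hA, if_neg hA, if_neg hA]; norm_num
    symm
    have expand : ∀ u : V, ∑ v : V, (if G.Adj u v then halfPerm σ s(u, v) else 0)
        = ((∑ v : V, (if G.Adj u v then (if σ u = v then (1:ℝ) else 0) else 0))
          + ∑ v : V, (if G.Adj u v then (if σ v = u then (1:ℝ) else 0) else 0)) / 2 := by
      intro u
      rw [Finset.sum_congr rfl fun v _ => hterm u v, ← Finset.sum_div,
        Finset.sum_add_distrib]
    rw [Finset.sum_congr rfl fun u _ => expand u, ← Finset.sum_div,
      Finset.sum_add_distrib, S2]
    ring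
  -- weight identity
  have hweight : weight G f = ∑ σ : Equiv.Perm V, w σ * weight G (halfPerm σ) := by
    have h2w : 2 * weight G f
        = ∑ σ : Equiv.Perm V, w σ * (2 * weight G (halfPerm σ)) := by
      rw [← double]
      have hterm : ∀ u v : V, (if G.Adj u v then f s(u, v) else 0)
          = ∑ σ : Equiv.Perm V,
              w σ * (if G.Adj u v then (if σ u = v then (1:ℝ) else 0) else 0) := by
        intro u v
        by_cases hA : G.Adj u v
        · have hfM : f s(u, v) = M u v := by
            simp only [hM, if_neg hA.ne, if_pos hA]
          rw [if_pos hA, hfM, hentry]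
          exact Finset.sum_congr rfl fun σ _ => by rw [if_pos hA]
        · simp [if_neg hA]
      rw [Finset.sum_congr rfl fun u _ => Finset.sum_congr rfl fun v _ => hterm u v]
      rw [Finset.sum_congr rfl fun u (_ : u ∈ Finset.univ) =>
        Finset.sum_comm (γ := V) (s := Finset.univ) (t := Finset.univ), Finset.sum_comm]
      refine Finset.sum_congr rfl fun σ _ => ?_
      rw [← hW σ, Finset.mul_sum]
      exact Finset.sum_congr rfl fun u _ => by rw [Finset.mul_sum]
    have hfold : ∑ σ : Equiv.Perm V, w σ * (2 * weight G (halfPerm σ))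
        = 2 * ∑ σ : Equiv.Perm V, w σ * weight G (halfPerm σ) := by
      rw [Finset.mul_sum]
      exact Finset.sum_congr rfl fun σ _ => by ring
    rw [hfold] at h2w
    linarith
  -- choose a good permutation
  by_contra hcon
  push_neg at hcon
  have hlt : ∀ σ : Equiv.Perm V, w σ ≠ 0 → weight G (halfPerm σ) < weight G f := by
    intro σ hσ
    exact hcon σ (hcomp σ hσ)
  obtain ⟨σ₀, -, hσ₀⟩ := Finset.exists_ne_zero_of_sum_ne_zero
    (s := (Finset.univ : Finset (Equiv.Perm V))) (by rw [hw1]; norm_num : _ ≠ (0:ℝ))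
  have hstrict : ∑ σ : Equiv.Perm V, w σ * weight G (halfPerm σ)
      < ∑ σ : Equiv.Perm V, w σ * weight G f := by
    refine Finset.sum_lt_sum (fun σ _ => ?_) ⟨σ₀, Finset.mem_univ σ₀, ?_⟩
    · by_cases hσ : w σ = 0
      · simp [hσ]
      · exact mul_le_mul_of_nonneg_left (le_of_lt (hlt σ hσ)) (hw0 σ)
    · have hpos : 0 < w σ₀ := lt_of_le_of_ne (hw0 σ₀) (Ne.symm hσ₀)
      exact mul_lt_mul_of_pos_left (hlt σ₀ hσ₀) hpos
  rw [← hweight, ← Finset.sum_mul, hw1, one_mul] at hstrict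
  exact lt_irrefl _ hstrict

lemma zero_isFracMatching : IsFracMatching G (fun _ => 0) := by
  refine ⟨fun e => by norm_num, fun e _ => rfl, fun v => ?_⟩
  simp

lemma nuF_bddAbove : BddAbove (weight G '' {f | IsFracMatching G f}) := by
  refine ⟨(G.edgeFinset.card : ℝ), ?_⟩
  rintro x ⟨f, hf, rfl⟩
  calc weight G f = ∑ e ∈ G.edgeFinset, f e := rfl
    _ ≤ ∑ e ∈ G.edgeFinset, 1 := Finset.sum_le_sum fun e _ => (hf.1 e).2
    _ = (G.edgeFinset.card : ℝ) := by simp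

end HalfIntegral

/-- `2 μ_f(G)` is an integer, and there is a maximum fractional matching
taking values in `{0, 1/2, 1}`. -/
theorem stmt0 {V : Type*} [Fintype V] [DecidableEq V] (G : SimpleGraph V)
    [DecidableRel G.Adj] :
    (∃ n : ℤ, 2 * nuF G = (n : ℝ)) ∧
      ∃ f : Sym2 V → ℝ, IsMaxFracMatching G f ∧
        ∀ e : Sym2 V, f e ∈ ({0, 1/2, 1} : Set ℝ) := by
  classical
  set T : Set (Sym2 V → ℝ) :=
    {g | IsFracMatching G g ∧ ∀ e, g e ∈ ({0, 1/2, 1} : Set ℝ)} with hT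
  have hTfin : T.Finite := by
    have hfin : (Set.univ.pi fun _ : Sym2 V => ({0, 1/2, 1} : Set ℝ)).Finite :=
      Set.Finite.pi fun _ => ((Set.finite_singleton (1:ℝ)).insert (1/2)).insert 0
    exact hfin.subset fun g hg => Set.mem_univ_pi.2 fun e => hg.2 e
  have hT0 : (fun _ => (0:ℝ)) ∈ T := ⟨zero_isFracMatching G, fun e => Or.inl rfl⟩
  obtain ⟨f₀, hf₀mem, hmax⟩ := Finset.exists_max_image hTfin.toFinset (weight G)
    ⟨_, hTfin.mem_toFinset.2 hT0⟩
  have hf₀T : f₀ ∈ T := hTfin.mem_toFinset.1 hf₀mem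
  have hub : ∀ f, IsFracMatching G f → weight G f ≤ weight G f₀ := by
    intro f hf
    obtain ⟨σ, hσcomp, hσle⟩ := exists_halfPerm_ge G hf
    refine hσle.trans (hmax _ (hTfin.mem_toFinset.2 ?_))
    exact ⟨halfPerm_isFracMatching G σ hσcomp, halfPerm_mem σ⟩
  have hnu : nuF G = weight G f₀ := by
    refine le_antisymm ?_ ?_
    · refine csSup_le ⟨weight G (fun _ => 0), Set.mem_image_of_mem _ hT0.1⟩ ?_
      rintro x ⟨f, hf, rfl⟩
      exact hub f hf
    · exact le_csSup (nuF_bddAbove G) (Set.mem_image_of_mem _ hf₀T.1)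
  constructor
  · have hint : ∀ e : Sym2 V, ∃ m : ℤ, 2 * f₀ e = (m : ℝ) := by
      intro e
      rcases hf₀T.2 e with h | h | h
      · exact ⟨0, by rw [h]; norm_num⟩
      · exact ⟨1, by rw [h]; norm_num⟩
      · exact ⟨2, by rw [h]; norm_num⟩
    choose m hm using hint
    refine ⟨∑ e ∈ G.edgeFinset, m e, ?_⟩
    rw [hnu, weight, Finset.mul_sum]
    rw [Finset.sum_congr rfl fun e _ => hm e]
    push_cast
    rfl
  · exact ⟨f₀, ⟨hf₀T.1, hnu.symm⟩, hf₀T.2⟩
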